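/- arXiv:2103.03276 — 3 statements merged into one kernel-verified Lean document; each statement's English description precedes it below -/
import Mathlib

section
/- Let F be a real polynomial of degree n ≥ 1 with positive leading coefficient aₙ, increasing on [C, ∞), with inverse function F⁻¹ : [F(C), ∞) → [C, ∞). Then lim_{x→∞} [(x/aₙ)^{1/n} − F⁻¹(x)] = aₙ₋₁/(n·aₙ), where aₙ₋₁ is the coefficient of Xⁿ⁻¹ in F. -/
open Polynomial Filter Set

lemma key_poly_lim (F : Polynomial ℝ) (n : ℕ) (hn : 1 ≤ n)
    (hdeg : F.natDegree = n) (hpos : 0 < F.leadingCoeff) :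
    Tendsto (fun t : ℝ => (F.eval t / F.leadingCoeff) ^ ((n : ℝ)⁻¹) - t) atTop
      (nhds (F.coeff (n - 1) / (n * F.leadingCoeff))) := by
  set a := F.leadingCoeff with ha_def
  set b := F.coeff (n - 1) with hb_def
  have ha' : a ≠ 0 := ne_of_gt hpos
  have hn0 : (n : ℝ) ≠ 0 := by positivity
  have hFne : F ≠ 0 := fun h => ha' (by simp [ha_def, h])
  set G : Polynomial ℝ := F - Polynomial.C a * X ^ n with hG_def
  have hGcoeff : G.coeff (n - 1) = b := by
    have hne : n ≠ n - 1 := by omega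
    simp only [hG_def, coeff_sub, coeff_C_mul, coeff_X_pow, hb_def]
    rw [if_neg (by omega : ¬ n - 1 = n)]
    ring
  have hGdeg : G.degree ≤ ((n - 1 : ℕ) : WithBot ℕ) := by
    rw [degree_le_iff_coeff_zero]
    intro m hm
    have hm2 : n - 1 < m := by exact_mod_cast hm
    have hm' : n ≤ m := by omega
    rcases eq_or_lt_of_le hm' with h | h
    · have : F.coeff n = a := by rw [ha_def, ← hdeg, coeff_natDegree]
      simp [hG_def, coeff_X_pow, ← h, this]
    · have h1 : F.coeff m = 0 := coeff_eq_zero_of_natDegree_lt (by omega)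
      have hne : n ≠ m := by omega
      simp only [hG_def, coeff_sub, coeff_C_mul, coeff_X_pow, h1]
      rw [if_neg (by omega : ¬ m = n)]
      ring
  -- limit of G.eval t / t^(n-1)
  have h2' : Tendsto (fun t : ℝ => G.eval t / t ^ (n - 1)) atTop (nhds b) := by
    have hxeval : ∀ t : ℝ, eval t ((X : Polynomial ℝ) ^ (n - 1)) = t ^ (n - 1) := by simp
    by_cases hb : b = 0
    · have hlt : G.degree < ((X : Polynomial ℝ) ^ (n - 1)).degree := by
        rw [degree_X_pow]
        refine lt_of_le_of_ne hGdeg fun h => ?_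
        have hnd : G.natDegree = n - 1 := natDegree_eq_of_degree_eq_some h
        have : G.leadingCoeff = 0 := by rw [leadingCoeff, hnd, hGcoeff, hb]
        rw [leadingCoeff_eq_zero] at this
        rw [this] at h; simp at h
      have := Polynomial.div_tendsto_zero_of_degree_lt G _ hlt
      simp only [hxeval] at this
      simpa [hb] using this
    · have hGne : G ≠ 0 := fun h => hb (by rw [← hGcoeff, h]; simp)
      have hnd : G.natDegree = n - 1 :=
        le_antisymm (natDegree_le_iff_degree_le.2 hGdeg) (le_natDegree_of_ne_zero (hGcoeff ▸ hb))
      have hdeq : G.degree = ((X : Polynomial ℝ) ^ (n - 1)).degree := by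
        rw [degree_X_pow, degree_eq_natDegree hGne, hnd]
      have := Polynomial.div_tendsto_leadingCoeff_div_of_degree_eq G _ hdeq
      simp only [hxeval] at this
      simpa [leadingCoeff, hnd, hGcoeff] using this
  -- limit of F.eval t / (a * t^n)
  have h1 : Tendsto (fun t : ℝ => F.eval t / (a * t ^ n)) atTop (nhds 1) := by
    have hQdeg : F.degree = (Polynomial.C a * X ^ n).degree := by
      rw [degree_C_mul_X_pow n ha', degree_eq_natDegree hFne, hdeg]
    have := Polynomial.div_tendsto_leadingCoeff_div_of_degree_eq F _ hQdeg
    simp only [leadingCoeff_C_mul_X_pow, eval_mul, eval_pow, eval_C, eval_X] at this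
    simpa [div_self ha', ← ha_def] using this
  -- the slope function
  set ψ : ℝ → ℝ := fun v => if v = 1 then (n : ℝ)⁻¹ else (v ^ ((n : ℝ)⁻¹) - 1) / (v - 1)
    with hψ_def
  have hψ : Tendsto ψ (nhds 1) (nhds ((n : ℝ)⁻¹)) := by
    have hder : HasDerivAt (fun v : ℝ => v ^ ((n : ℝ)⁻¹)) ((n : ℝ)⁻¹) 1 := by
      simpa using Real.hasDerivAt_rpow_const (x := 1) (p := (n : ℝ)⁻¹) (Or.inl one_ne_zero)
    have hs := hasDerivAt_iff_tendsto_slope.1 hder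
    rw [← nhdsNE_sup_pure 1, tendsto_sup]
    constructor
    · refine hs.congr' ?_
      filter_upwards [self_mem_nhdsWithin] with v hv
      have hv' : v ≠ 1 := hv
      simp [slope_def_field, hψ_def, hv', Real.one_rpow, div_eq_div_iff]
    · have := tendsto_pure_nhds ψ 1
      simpa [hψ_def] using this
  have hcomp : Tendsto (fun t : ℝ => ψ (F.eval t / (a * t ^ n))) atTop (nhds ((n : ℝ)⁻¹)) :=
    hψ.comp h1
  -- limit of t * (r - 1)
  have h2 : Tendsto (fun t : ℝ => t * (F.eval t / (a * t ^ n) - 1)) atTop (nhds (b / a)) := by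
    have : Tendsto (fun t : ℝ => G.eval t / t ^ (n - 1) / a) atTop (nhds (b / a)) :=
      h2'.div_const a
    refine this.congr' ?_
    filter_upwards [eventually_gt_atTop (0 : ℝ)] with t ht
    have ht' : t ≠ 0 := ne_of_gt ht
    have hpow : (t : ℝ) ^ n = t ^ (n - 1) * t := by
      rw [← pow_succ]; congr 1; omega
    have hGeval : G.eval t = F.eval t - a * t ^ n := by simp [hG_def]
    rw [hGeval, hpow]
    field_simp
  -- combine
  have hfinal : Tendsto
      (fun t : ℝ => (t * (F.eval t / (a * t ^ n) - 1)) * ψ (F.eval t / (a * t ^ n)))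
      atTop (nhds (b / a * (n : ℝ)⁻¹)) := h2.mul hcomp
  have hval : b / a * (n : ℝ)⁻¹ = b / (n * a) := by
    rw [div_mul_eq_mul_div, ← div_eq_mul_inv, div_div]
  rw [← hval]
  refine hfinal.congr' ?_
  filter_upwards [eventually_gt_atTop (0 : ℝ),
    h1.eventually (eventually_gt_nhds (by norm_num : (0 : ℝ) < 1))] with t ht hr
  set r := F.eval t / (a * t ^ n) with hr_def
  have htn : (0 : ℝ) < t ^ n := pow_pos ht n
  have hFa : F.eval t / a = r * t ^ n := by rw [hr_def]; field_simp
  rw [hFa, Real.mul_rpow hr.le htn.le]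
  have hp : ((t : ℝ) ^ n) ^ ((n : ℝ)⁻¹) = t := by
    rw [← Real.rpow_natCast t n, ← Real.rpow_mul ht.le, mul_inv_cancel₀ hn0, Real.rpow_one]
  rw [hp]
  by_cases hr1 : r = 1
  · simp [hψ_def, hr1, Real.one_rpow]
  · have hsub : r - 1 ≠ 0 := sub_ne_zero.2 hr1
    simp only [hψ_def, if_neg hr1]
    field_simp

/-- If `F` is a real polynomial of degree `n ≥ 1` with positive leading coefficient `aₙ`,
increasing on `[C, ∞)` with inverse `Finv` there, then
`(x / aₙ)^(1/n) - Finv x → aₙ₋₁ / (n * aₙ)` as `x → ∞`. -/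
theorem inverse_poly_asymptotics (F : Polynomial ℝ) (n : ℕ) (hn : 1 ≤ n)
    (hdeg : F.natDegree = n) (hpos : 0 < F.leadingCoeff)
    (C : ℝ) (hmono : StrictMonoOn F.eval (Set.Ici C))
    (Finv : ℝ → ℝ)
    (hleft : ∀ x ∈ Set.Ici C, Finv (F.eval x) = x)
    (hright : ∀ y ∈ Set.Ici (F.eval C), Finv y ∈ Set.Ici C ∧ F.eval (Finv y) = y) :
    Tendsto (fun x : ℝ => (x / F.leadingCoeff) ^ ((n : ℝ)⁻¹) - Finv x) atTop
      (nhds (F.coeff (n - 1) / (n * F.leadingCoeff))) := by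
  have hFinvTop : Tendsto Finv atTop atTop := by
    rw [tendsto_atTop]
    intro M
    set M' := max M C with hM'
    have hM'C : M' ∈ Set.Ici C := by simp [hM']
    filter_upwards [eventually_ge_atTop (max (F.eval C) (F.eval M'))] with x hx
    have hx1 : x ∈ Set.Ici (F.eval C) := le_trans (le_max_left _ _) hx
    obtain ⟨hmem, heq⟩ := hright x hx1
    have : F.eval M' ≤ F.eval (Finv x) := by rw [heq]; exact le_trans (le_max_right _ _) hx
    have hle : M' ≤ Finv x := (hmono.le_iff_le hM'C hmem).1 this
    exact le_trans (le_max_left M C) hle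
  have hkey := key_poly_lim F n hn hdeg hpos
  refine (hkey.comp hFinvTop).congr' ?_
  filter_upwards [eventually_ge_atTop (F.eval C)] with x hx
  obtain ⟨hmem, heq⟩ := hright x hx
  simp [Function.comp, heq]
end

section
/- Let F be a real polynomial of degree n ≥ 1 with positive leading coefficient aₙ, strictly increasing on [C, ∞) with inverse F⁻¹, and let G(x) = bₘxᵐ + ... + b₀ be a real polynomial of degree m ≥ 1. Then (bₘ/aₙ^{m/n})·x^{m/n} − G(F⁻¹(x)) = o(x^{m/n}) as x → ∞. -/
open Polynomial Filter Set Asymptotics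

/-- If `F` is a real polynomial of degree `n ≥ 1` with positive leading coefficient `aₙ`,
strictly increasing on `[C, ∞)` with inverse `Finv`, and `G` is a real polynomial of degree
`m ≥ 1` with leading coefficient `bₘ`, then
`(bₘ / aₙ^(m/n)) * x^(m/n) - G(Finv x) = o(x^(m/n))` as `x → ∞`, in the sense that the
quotient tends to `0`. -/
theorem composed_inverse_poly_littleO (F G : Polynomial ℝ) (n m : ℕ)
    (hn : 1 ≤ n) (hm : 1 ≤ m)
    (hdegF : F.natDegree = n) (hposF : 0 < F.leadingCoeff)
    (hdegG : G.natDegree = m)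
    (C : ℝ) (hmono : StrictMonoOn F.eval (Set.Ici C))
    (Finv : ℝ → ℝ)
    (hleft : ∀ x ∈ Set.Ici C, Finv (F.eval x) = x)
    (hright : ∀ y ∈ Set.Ici (F.eval C), Finv y ∈ Set.Ici C ∧ F.eval (Finv y) = y) :
    Tendsto
      (fun x : ℝ =>
        ((G.leadingCoeff / F.leadingCoeff ^ ((m : ℝ) / (n : ℝ))) * x ^ ((m : ℝ) / (n : ℝ)) -
            G.eval (Finv x)) / x ^ ((m : ℝ) / (n : ℝ)))
      atTop (nhds 0) := by
  set a := F.leadingCoeff with ha_def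
  set b := G.leadingCoeff with hb_def
  set p : ℝ := (m : ℝ) / (n : ℝ) with hp_def
  have hn0 : (n : ℝ) ≠ 0 := Nat.cast_ne_zero.mpr (by omega)
  have hp0 : 0 ≤ p := div_nonneg (Nat.cast_nonneg m) (Nat.cast_nonneg n)
  have hGne : G ≠ 0 := by
    intro h
    rw [h, natDegree_zero] at hdegG
    omega
  have hb : b ≠ 0 := leadingCoeff_ne_zero.mpr hGne
  have ha : a ≠ 0 := ne_of_gt hposF
  have hdegFpos : 0 < F.degree := natDegree_pos_iff_degree_pos.mp (by omega)
  -- F tends to infinity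
  have hFtop : Tendsto (fun y => F.eval y) atTop atTop :=
    F.tendsto_atTop_of_leadingCoeff_nonneg hdegFpos hposF.le
  -- Finv tends to infinity
  have hFinvtop : Tendsto Finv atTop atTop := by
    rw [tendsto_atTop_atTop]
    intro M
    refine ⟨max (F.eval (max M C)) (F.eval C), fun x hx => ?_⟩
    have hx1 : F.eval C ≤ x := le_trans (le_max_right _ _) hx
    obtain ⟨h1, h2⟩ := hright x hx1
    by_contra hlt
    push_neg at hlt
    have hlt' : Finv x < max M C := lt_of_lt_of_le hlt (le_max_left _ _)
    have := hmono h1 (mem_Ici.mpr (le_max_right M C)) hlt'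
    dsimp only at this
    rw [h2] at this
    exact absurd (le_trans (le_max_left _ _) hx) (not_le.mpr this)
  -- limits of ratios
  have hFe := F.isEquivalent_atTop_lead
  rw [hdegF, ← ha_def] at hFe
  have hGe := G.isEquivalent_atTop_lead
  rw [hdegG, ← hb_def] at hGe
  have hvne : ∀ᶠ y : ℝ in atTop, a * y ^ n ≠ 0 := by
    filter_upwards [eventually_gt_atTop 0] with y hy
    exact mul_ne_zero ha (pow_ne_zero _ (ne_of_gt hy))
  have hF1 : Tendsto (fun y => F.eval y / (a * y ^ n)) atTop (nhds 1) :=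
    (isEquivalent_iff_tendsto_one hvne).mp hFe
  have hF2 : Tendsto (fun y => a * y ^ n / F.eval y) atTop (nhds 1) := by
    have := hF1.inv₀ one_ne_zero
    rw [inv_one] at this
    exact this.congr fun y => by rw [inv_div]
  have hF3 : Tendsto (fun y => y ^ n / F.eval y) atTop (nhds a⁻¹) := by
    have := hF2.const_mul a⁻¹
    rw [mul_one] at this
    exact this.congr fun y => by
      rw [mul_div_assoc', inv_mul_cancel_left₀ ha]
  have hF4 : Tendsto (fun y => (y ^ n / F.eval y) ^ p) atTop (nhds (a⁻¹ ^ p)) :=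
    (Real.continuousAt_rpow_const a⁻¹ p (Or.inr hp0)).tendsto.comp hF3
  have hwne : ∀ᶠ y : ℝ in atTop, b * y ^ m ≠ 0 := by
    filter_upwards [eventually_gt_atTop 0] with y hy
    exact mul_ne_zero hb (pow_ne_zero _ (ne_of_gt hy))
  have hG0 : Tendsto (fun y => G.eval y / (b * y ^ m)) atTop (nhds 1) :=
    (isEquivalent_iff_tendsto_one hwne).mp hGe
  have hG1 : Tendsto (fun y => G.eval y / y ^ m) atTop (nhds b) := by
    have := hG0.const_mul b
    rw [mul_one] at this
    exact this.congr fun y => by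
      rw [mul_comm b (y ^ m), ← div_div, mul_comm b, div_mul_cancel₀ _ hb]
  have hprod : Tendsto (fun y => (G.eval y / y ^ m) * ((y ^ n / F.eval y) ^ p)) atTop
      (nhds (b * a⁻¹ ^ p)) := hG1.mul hF4
  -- main limit
  have hmain : Tendsto (fun y => G.eval y / (F.eval y) ^ p) atTop (nhds (b / a ^ p)) := by
    have hlim : b * a⁻¹ ^ p = b / a ^ p := by
      rw [Real.inv_rpow hposF.le, div_eq_mul_inv]
    rw [← hlim]
    apply hprod.congr'
    filter_upwards [eventually_gt_atTop 0, hFtop.eventually (eventually_gt_atTop 0)] with y hy hFy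
    have hyn : (y ^ n : ℝ) ^ p = y ^ m := by
      rw [← Real.rpow_natCast y n, ← Real.rpow_natCast y m, ← Real.rpow_mul hy.le]
      congr 1
      rw [hp_def]; field_simp
    rw [Real.div_rpow (pow_nonneg hy.le n) hFy.le, hyn, div_mul_div_comm,
      mul_comm (y ^ m : ℝ), mul_div_mul_right _ _ (pow_ne_zero m (ne_of_gt hy))]
  have hcomp : Tendsto (fun x => G.eval (Finv x) / (F.eval (Finv x)) ^ p) atTop
      (nhds (b / a ^ p)) := hmain.comp hFinvtop
  have hfinal : Tendsto (fun x => b / a ^ p - G.eval (Finv x) / (F.eval (Finv x)) ^ p) atTop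
      (nhds 0) := by
    have := (tendsto_const_nhds (x := b / a ^ p) (f := atTop)).sub hcomp
    rwa [sub_self] at this
  apply hfinal.congr'
  filter_upwards [eventually_ge_atTop (F.eval C), eventually_gt_atTop 0] with x hx hx0
  obtain ⟨h1, h2⟩ := hright x hx
  have hxp : (x : ℝ) ^ p ≠ 0 := (Real.rpow_pos_of_pos hx0 p).ne'
  rw [h2, sub_div, mul_div_assoc, div_self hxp, mul_one]
end

section
/- Let M be an ω-stable structure (all Morley ranks exist and are ordinals), X a definable set with Morley rank, Y a definable set of Morley rank ≥ S, and f : X → Y a definable surjection such that MR(f⁻¹(y)) ≥ R for every y ∈ Y, where R, S are natural numbers. Then MR(X) ≥ R + S. -/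
open FirstOrder Set

/-- `MRge L M r s` expresses that the Morley rank (computed in the structure `M`) of the
set `s` of tuples is at least `r`: every set has rank `≥ 0` iff it is nonempty, and rank
`≥ r + 1` iff it contains infinitely many pairwise disjoint definable subsets of rank
`≥ r`. -/
def MRge (L : FirstOrder.Language) (M : Type*) [L.Structure M] {α : Type*} :
    ℕ → Set (α → M) → Prop
  | 0, s => s.Nonempty
  | (r + 1), s =>
      ∃ t : ℕ → Set (α → M), (∀ i, (Set.univ : Set M).Definable L (t i)) ∧
        (∀ i, t i ⊆ s) ∧ Pairwise (Function.onFun Disjoint t) ∧ ∀ i, MRge L M r (t i)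

section Aux

variable {L : FirstOrder.Language} {M : Type*} [L.Structure M]

lemma MRge.mono' {α : Type*} {r : ℕ} {s s' : Set (α → M)} (h : MRge L M r s) (hs : s ⊆ s') :
    MRge L M r s' := by
  cases r with
  | zero => exact h.mono hs
  | succ r =>
    obtain ⟨t, h1, h2, h3, h4⟩ := h
    exact ⟨t, h1, fun i => (h2 i).trans hs, h3, h4⟩

/-- Projection along `Sum.inl` of a definable set is definable, for arbitrary index types. -/
lemma Set.Definable.image_comp_sum_inl' {A : Set M} {α β : Type*} {s : Set (α ⊕ β → M)}
    (hs : A.Definable L s) :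
    A.Definable L ((fun g : α ⊕ β → M => g ∘ Sum.inl) '' s) := by
  classical
  rcases s.eq_empty_or_nonempty with rfl | ⟨p, hp⟩
  · rw [Set.image_empty]; exact Set.definable_empty
  obtain ⟨φ, rfl⟩ := hs
  set F := φ.freeVarFinset with hF
  set Fb : Finset β := F.preimage Sum.inr (Sum.inr_injective.injOn) with hFb
  set m := Fintype.card ↥Fb with hm
  set e : ↥Fb ≃ Fin m := Fintype.equivFin ↥Fb with he
  set ψ0 := φ.restrictFreeVar (Set.inclusion (Set.Subset.refl (↑F : Set (α ⊕ β)))) with hψ0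
  set g : ↥(↑F : Set (α ⊕ β)) → α ⊕ Fin m := fun v =>
    match v with
    | ⟨Sum.inl a, _⟩ => Sum.inl a
    | ⟨Sum.inr b, hb⟩ => Sum.inr (e ⟨b, Finset.mem_preimage.mpr hb⟩) with hg
  set χ : (L.withConstants A).Formula (α ⊕ Fin m) :=
    (ψ0.toFormula.relabel (Sum.elim g Fin.elim0)) with hχ
  have hχreal : ∀ u : α ⊕ Fin m → M, χ.Realize u ↔ ψ0.Realize (u ∘ g) (default : Fin 0 → M) := by
    intro u
    rw [hχ, Language.Formula.realize_relabel, Language.BoundedFormula.realize_toFormula]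
    constructor <;> (intro h; convert h using 2) <;>
      · funext z
        rcases z with z | z
        · rfl
        · rfl
  have key : (fun g : α ⊕ β → M => g ∘ Sum.inl) '' (setOf φ.Realize) =
      (fun g : α ⊕ Fin m → M => g ∘ Sum.inl) '' (setOf χ.Realize) := by
    ext x
    simp only [Set.mem_image, Set.mem_setOf_eq]
    constructor
    · rintro ⟨v, hv, rfl⟩
      refine ⟨Sum.elim (v ∘ Sum.inl) (fun i => v (Sum.inr ((e.symm i).1))), ?_, rfl⟩
      change χ.Realize _
      rw [hχreal]
      have : (Sum.elim (v ∘ Sum.inl) (fun i => v (Sum.inr ((e.symm i).1)))) ∘ g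
          = v ∘ (Subtype.val : {x : α ⊕ β // x ∈ (↑F : Set (α ⊕ β))} → α ⊕ β) := by
        funext z
        rcases z with ⟨z, hz⟩
        rcases z with a | b
        · rfl
        · show v (Sum.inr ((e.symm (e _)).1)) = v (Sum.inr b)
          rw [Equiv.symm_apply_apply]
      rw [this]
      have := Language.BoundedFormula.realize_restrictFreeVar' (L := L.withConstants A)
        (φ := φ) (s := (↑F : Set (α ⊕ β))) (Set.Subset.refl _) (v := v)
        (xs := (default : Fin 0 → M))
      rw [← hψ0] at this
      rw [this]
      exact hv
    · rintro ⟨u, hu, rfl⟩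
      change χ.Realize u at hu
      rw [hχreal] at hu
      set q : β → M := fun b =>
        if hb : b ∈ Fb then u (Sum.inr (e ⟨b, hb⟩)) else p (Sum.inr b) with hq
      refine ⟨Sum.elim (u ∘ Sum.inl) q, ?_, rfl⟩
      have hcomp : (Sum.elim (u ∘ Sum.inl) q : α ⊕ β → M) ∘
          (Subtype.val : {x : α ⊕ β // x ∈ (↑F : Set (α ⊕ β))} → α ⊕ β) = u ∘ g := by
        funext z
        rcases z with ⟨z, hz⟩
        rcases z with a | b
        · rfl
        · show q b = u (g ⟨Sum.inr b, hz⟩)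
          have hb : b ∈ Fb := Finset.mem_preimage.mpr hz
          rw [hq]
          simp only [hb, dif_pos]
          rfl
      have := Language.BoundedFormula.realize_restrictFreeVar' (L := L.withConstants A)
        (φ := φ) (s := (↑F : Set (α ⊕ β))) (Set.Subset.refl _)
        (v := Sum.elim (u ∘ Sum.inl) q) (xs := (default : Fin 0 → M))
      rw [← hψ0, hcomp] at this
      exact this.mp hu
  rw [show Set.ofPred φ.Realize = setOf φ.Realize from rfl, key]
  exact Set.Definable.image_comp_sumInl_fin m ⟨χ, rfl⟩

lemma MRge_aux {α β : Type*} (f : (α → M) → (β → M)) (R : ℕ) :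
    ∀ (S : ℕ) (X : Set (α → M)) (Y : Set (β → M)),
      (Set.univ : Set M).Definable L
        {p : α ⊕ β → M | (fun a => p (Sum.inl a)) ∈ X ∧
          f (fun a => p (Sum.inl a)) = fun b => p (Sum.inr b)} →
      (∀ y ∈ Y, MRge L M R (X ∩ f ⁻¹' {y})) → MRge L M S Y → MRge L M (R + S) X := by
  intro S
  induction S with
  | zero =>
    intro X Y _ hfib hrank
    obtain ⟨y, hy⟩ := hrank
    exact (hfib y hy).mono' Set.inter_subset_left
  | succ S ih =>
    intro X Y hgraph hfib hrank
    obtain ⟨t, ht1, ht2, ht3, ht4⟩ := hrank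
    set G : Set (α ⊕ β → M) := {p : α ⊕ β → M | (fun a => p (Sum.inl a)) ∈ X ∧
        f (fun a => p (Sum.inl a)) = fun b => p (Sum.inr b)} with hG
    set Gi : ℕ → Set (α ⊕ β → M) :=
      fun i => G ∩ ((fun g : α ⊕ β → M => g ∘ Sum.inr) ⁻¹' (t i)) with hGi
    have hGidef : ∀ i, (Set.univ : Set M).Definable L (Gi i) :=
      fun i => hgraph.inter ((ht1 i).preimage_comp Sum.inr)
    set u : ℕ → Set (α → M) := fun i => (fun g : α ⊕ β → M => g ∘ Sum.inl) '' (Gi i) with hu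
    have hueq : ∀ i, u i = X ∩ f ⁻¹' (t i) := by
      intro i
      ext x
      simp only [hu, hGi, hG, Set.mem_image, Set.mem_inter_iff, Set.mem_preimage,
        Set.mem_setOf_eq]
      constructor
      · rintro ⟨v, ⟨⟨hvX, hvf⟩, hvt⟩, rfl⟩
        refine ⟨hvX, ?_⟩
        show f (fun a => v (Sum.inl a)) ∈ t i
        rw [hvf]; exact hvt
      · rintro ⟨hxX, hxf⟩
        refine ⟨Sum.elim x (f x), ⟨⟨hxX, by simp⟩, ?_⟩, rfl⟩
        show (fun b => (Sum.elim x (f x)) (Sum.inr b)) ∈ t i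
        simpa using hxf
    have hGi_graph : ∀ i, Gi i = {p : α ⊕ β → M | (fun a => p (Sum.inl a)) ∈ u i ∧
        f (fun a => p (Sum.inl a)) = fun b => p (Sum.inr b)} := by
      intro i
      ext v
      simp only [hGi, hG, hueq i, Set.mem_inter_iff, Set.mem_setOf_eq, Set.mem_preimage]
      constructor
      · rintro ⟨⟨hvX, hvf⟩, hvt⟩
        refine ⟨⟨hvX, ?_⟩, hvf⟩
        show f (fun a => v (Sum.inl a)) ∈ t i
        rw [hvf]; exact hvt
      · rintro ⟨⟨hvX, hvt⟩, hvf⟩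
        refine ⟨⟨hvX, hvf⟩, ?_⟩
        show (fun b => v (Sum.inr b)) ∈ t i
        rw [← hvf]; exact hvt
    refine ⟨u, fun i => (hGidef i).image_comp_sum_inl', fun i => ?_, ?_, fun i => ?_⟩
    · rw [hueq i]; exact Set.inter_subset_left
    · intro i j hij
      rw [Function.onFun, Set.disjoint_left]
      intro x hxi hxj
      rw [hueq i] at hxi
      rw [hueq j] at hxj
      exact Set.disjoint_left.mp (ht3 hij) hxi.2 hxj.2
    · refine ih (u i) (t i) ?_ ?_ (ht4 i)
      · rw [← hGi_graph i]; exact hGidef i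
      · intro y hy
        have : u i ∩ f ⁻¹' {y} = X ∩ f ⁻¹' {y} := by
          rw [hueq i]
          ext x
          simp only [Set.mem_inter_iff, Set.mem_preimage, Set.mem_singleton_iff]
          constructor
          · rintro ⟨⟨h1, _⟩, h3⟩; exact ⟨h1, h3⟩
          · rintro ⟨h1, h3⟩; exact ⟨⟨h1, by rw [h3]; exact hy⟩, h3⟩
        rw [this]
        exact hfib y (ht2 i hy)

end Aux

/-- If `f` is a definable surjection from `X` onto `Y`, all fibers have Morley rank `≥ R`,
and `Y` has Morley rank `≥ S`, then `X` has Morley rank `≥ R + S`.  (Part 1 of the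
fiber-rank lemma; the sets `X`, `Y` and the graph of `f` are definable with parameters.) -/
theorem MRge_add_of_definable_surjection (L : FirstOrder.Language) (M : Type*)
    [L.Structure M] {α β : Type*}
    (X : Set (α → M)) (Y : Set (β → M)) (f : (α → M) → (β → M))
    (hX : (Set.univ : Set M).Definable L X)
    (hY : (Set.univ : Set M).Definable L Y)
    (hgraph : (Set.univ : Set M).Definable L
      {p : α ⊕ β → M | (fun a => p (Sum.inl a)) ∈ X ∧
        f (fun a => p (Sum.inl a)) = fun b => p (Sum.inr b)})
    (hmaps : ∀ x ∈ X, f x ∈ Y)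
    (hsurj : ∀ y ∈ Y, ∃ x ∈ X, f x = y)
    (R S : ℕ)
    (hfib : ∀ y ∈ Y, MRge L M R (X ∩ f ⁻¹' {y}))
    (hrankY : MRge L M S Y) :
    MRge L M (R + S) X :=
  MRge_aux f R S X Y hgraph hfib hrankY
end
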